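/- Let ν be a class (ii) distribution with associated functions f, φ, Φ such that Φ⁻¹ is pseudo-regularly varying, i.e., limsup_{c→1} limsup_{x→∞} Φ⁻¹(cx)/Φ⁻¹(x) = 1. Let θ > 1 and let F_Φ be the associated divergence-generating function. Let η be a probability measure on [0,∞) with density g satisfying liminf_{x→∞} x^{t+1} g(x) > 0 for some t ∈ (1, θ). Then D_{F_Φ}(η|ν) = ∞. -/

import Mathlib

open Filter MeasureTheory Set
open scoped ENNReal Topology

noncomputable section

/-- The `F`-divergence `D_F(η|ν)` between a reference density `f` and an
alternative density `g` on `(0,∞)` (the value `⊤` encodes an infinite divergence). -/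
def Ddiv (F f g : ℝ → ℝ) : ℝ≥0∞ :=
  ∫⁻ x in Set.Ioi (0 : ℝ), ENNReal.ofReal (F (g x / f x) * f x)

/-- Generator of the polynomial (α-) divergence: `F(y) = (y^α - 1)/(α(α-1))`. -/
def Falpha (α : ℝ) : ℝ → ℝ := fun y => (y ^ α - 1) / (α * (α - 1))

/-- Class (i): the log-density grows at least linearly, `lim φ(x)/x > c > 0`. -/
def IsClassI (φ : ℝ → ℝ) : Prop :=
  ∃ c : ℝ, 0 < c ∧ ∀ᶠ x in atTop, c < φ x / x

/-- Data witnessing that a distribution with log-density `φ` (density `exp(-φ)`) is of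
class (ii): heavier than exponential but lighter than any power law, together with the
auxiliary function `Φ` and the inverse `Ψ = Φ⁻¹` of its restriction to `[x̄, ∞)`. -/
structure ClassIIData (φ : ℝ → ℝ) : Type where
  xbar : ℝ
  Φ : ℝ → ℝ
  Ψ : ℝ → ℝ
  xbar_pos : 0 < xbar
  tendsto_div_id : Tendsto (fun x => φ x / x) atTop (nhds 0)
  tendsto_div_log : Tendsto (fun x => φ x / Real.log x) atTop atTop
  pos : ∀ x ∈ Set.Ici xbar, 0 < Φ x
  strictConcave : StrictConcaveOn ℝ (Set.Ici xbar) Φ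
  smooth : ContDiffOn ℝ 2 Φ (Set.Ici xbar)
  strictMono : StrictMonoOn Φ (Set.Ici xbar)
  inv_left : ∀ x ∈ Set.Ici xbar, Ψ (Φ x) = x
  inv_right : ∀ y ∈ Set.Ici (Φ xbar), Φ (Ψ y) = y
  liminf_pos : ∃ c : ℝ, 0 < c ∧ ∀ᶠ x in atTop, c ≤ Ψ (φ x) / x
  limsup_lt_top : ∃ C : ℝ, ∀ᶠ x in atTop, Ψ (φ x) / x ≤ C

namespace ClassIIData

variable {φ : ℝ → ℝ}

/-- `ȳ = exp(Φ(x̄))`. -/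
def ybar (d : ClassIIData φ) : ℝ := Real.exp (d.Φ d.xbar)

/-- The constant `a = (1+log ȳ)/(Φ⁻¹(log ȳ)^θ + θ Φ⁻¹(log ȳ)^{θ-1} (Φ⁻¹)'(log ȳ))`. -/
def aconst (d : ClassIIData φ) (θ : ℝ) : ℝ :=
  (1 + Real.log d.ybar) /
    (d.Ψ (Real.log d.ybar) ^ θ +
      θ * d.Ψ (Real.log d.ybar) ^ (θ - 1) * deriv d.Ψ (Real.log d.ybar))

/-- The constant `b = ȳ log ȳ - a ȳ Φ⁻¹(log ȳ)^θ`. -/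
def bconst (d : ClassIIData φ) (θ : ℝ) : ℝ :=
  d.ybar * Real.log d.ybar - d.aconst θ * d.ybar * d.Ψ (Real.log d.ybar) ^ θ

/-- The divergence generator `F_Φ`: `y log y` for `y ≤ ȳ` and
`a y Φ⁻¹(log y)^θ + b` for `y > ȳ`. -/
def FPhi (d : ClassIIData φ) (θ : ℝ) : ℝ → ℝ := fun y =>
  if y ≤ d.ybar then y * Real.log y
  else d.aconst θ * y * d.Ψ (Real.log y) ^ θ + d.bconst θ

/-- `ψ(x) = a Φ⁻¹(x)^θ`. -/
def psiFun (d : ClassIIData φ) (θ : ℝ) : ℝ → ℝ := fun x => d.aconst θ * d.Ψ x ^ θ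

/-- The integrand of `I(c) = ∫_c^∞ e^y (ψ(y)+ψ'(y))(ψ'(y)+ψ''(y)) f((F_Φ'(e^y)-α₁)/α₂) dy`. -/
def Iintegrand (d : ClassIIData φ) (θ α₁ α₂ : ℝ) (f : ℝ → ℝ) : ℝ → ℝ := fun y =>
  Real.exp y * (d.psiFun θ y + deriv (d.psiFun θ) y) *
    (deriv (d.psiFun θ) y + deriv (deriv (d.psiFun θ)) y) *
    f ((deriv (d.FPhi θ) (Real.exp y) - α₁) / α₂)

end ClassIIData

/-- Convex conjugate over `s ≥ 0`: `F*(x) = sup_{s ≥ 0} (x s - F(s))`. -/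
def Fstar (F : ℝ → ℝ) : ℝ → ℝ := fun x => sSup ((fun s => x * s - F s) '' Set.Ici (0 : ℝ))

/-- Pseudo-regular variation: `limsup_{c→1} limsup_{x→∞} h(cx)/h(x) = 1`,
spelled out in ε-form. -/
def PseudoRegularlyVarying (h : ℝ → ℝ) : Prop :=
  (∀ ε > (0:ℝ), ∀ᶠ c in nhds (1:ℝ), ∀ᶠ x in atTop, h (c * x) / h x ≤ 1 + ε) ∧
  (∀ ε > (0:ℝ), ∃ᶠ c in nhds (1:ℝ), ∃ᶠ x in atTop, 1 - ε ≤ h (c * x) / h x)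

section Aux

variable {φ : ℝ → ℝ}

lemma aux_phi_tendsto (d : ClassIIData φ) : Tendsto φ atTop atTop := by
  apply tendsto_atTop_mono' atTop _ Real.tendsto_log_atTop
  filter_upwards [d.tendsto_div_log.eventually_ge_atTop 1, eventually_ge_atTop (2:ℝ)]
    with x h1 h2
  have hl : 0 < Real.log x := Real.log_pos (by linarith)
  calc Real.log x = 1 * Real.log x := (one_mul _).symm
    _ ≤ (φ x / Real.log x) * Real.log x := by nlinarith
    _ = φ x := div_mul_cancel₀ _ hl.ne'

lemma aux_exists_large (d : ClassIIData φ) (M : ℝ) : ∃ z, d.xbar ≤ z ∧ M ≤ d.Φ z := by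
  obtain ⟨c, hc, hev⟩ := d.liminf_pos
  obtain ⟨x, h1, h2, h3⟩ := (hev.and
    (((aux_phi_tendsto d).eventually_ge_atTop (max M (d.Φ d.xbar))).and
      (eventually_ge_atTop (max (d.xbar / c) 1)))).exists
  have hx1 : (1:ℝ) ≤ x := le_trans (le_max_right _ _) h3
  have hx0 : 0 < x := by linarith
  have hcx : c * x ≤ d.Ψ (φ x) := by
    have := (le_div_iff₀ hx0).mp h1
    linarith
  have hxb : d.xbar ≤ c * x := by
    have : d.xbar / c ≤ x := le_trans (le_max_left _ _) h3
    calc d.xbar = c * (d.xbar / c) := by field_simp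
      _ ≤ c * x := by nlinarith
  refine ⟨d.Ψ (φ x), le_trans hxb hcx, ?_⟩
  rw [d.inv_right (φ x) (le_trans (le_max_right _ _) h2)]
  exact le_trans (le_max_left _ _) h2

lemma aux_psi_eq (d : ClassIIData φ) {y : ℝ} (hy : d.Φ d.xbar ≤ y) :
    d.xbar ≤ d.Ψ y := by
  obtain ⟨z1, hz1, hz1M⟩ := aux_exists_large d y
  have hcont : ContinuousOn d.Φ (Icc d.xbar z1) :=
    d.smooth.continuousOn.mono Icc_subset_Ici_self
  obtain ⟨z, hz, hzy⟩ := intermediate_value_Icc hz1 hcont ⟨hy, hz1M⟩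
  have : d.Ψ y = z := by rw [← hzy, d.inv_left z hz.1]
  rw [this]; exact hz.1

lemma aux_psi_mono (d : ClassIIData φ) {y z : ℝ} (hy : d.Φ d.xbar ≤ y) (hyz : y ≤ z) :
    d.Ψ y ≤ d.Ψ z := by
  have hz : d.Φ d.xbar ≤ z := le_trans hy hyz
  have h1 := aux_psi_eq d hy
  have h2 := aux_psi_eq d hz
  by_contra h
  push_neg at h
  have h3 := d.strictMono h2 h1 h
  rw [d.inv_right y hy, d.inv_right z hz] at h3
  linarith

lemma aux_deriv_nonneg (d : ClassIIData φ) : 0 ≤ deriv d.Ψ (d.Φ d.xbar) := by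
  set p := d.Φ d.xbar with hp
  by_cases hdiff : DifferentiableAt ℝ d.Ψ p
  · have hslope : Tendsto (slope d.Ψ p) (𝓝[>] p) (𝓝 (deriv d.Ψ p)) :=
      (hasDerivWithinAt_iff_tendsto_slope' notMem_Ioi_self).mp
        (hdiff.hasDerivAt.hasDerivWithinAt (s := Ioi p))
    refine ge_of_tendsto hslope ?_
    filter_upwards [self_mem_nhdsWithin] with y hy
    rw [slope_def_field]
    apply div_nonneg _ (by simp only [mem_Ioi] at hy; linarith)
    have := aux_psi_mono d (le_refl p) (le_of_lt hy)
    linarith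
  · rw [deriv_zero_of_not_differentiableAt hdiff]

lemma aux_aconst_pos (d : ClassIIData φ) {θ : ℝ} (hθ : 1 < θ) : 0 < d.aconst θ := by
  have hp0 : 0 < d.Φ d.xbar := d.pos d.xbar self_mem_Ici
  have hlog : Real.log d.ybar = d.Φ d.xbar := Real.log_exp _
  have hpsi : d.Ψ (Real.log d.ybar) = d.xbar := by
    rw [hlog, d.inv_left d.xbar self_mem_Ici]
  unfold ClassIIData.aconst
  rw [hpsi, hlog]
  apply div_pos (by linarith)
  have h1 : 0 < d.xbar ^ θ := Real.rpow_pos_of_pos d.xbar_pos θ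
  have h2 : 0 < d.xbar ^ (θ - 1) := Real.rpow_pos_of_pos d.xbar_pos (θ - 1)
  have h3 := aux_deriv_nonneg d
  nlinarith [mul_nonneg (mul_nonneg (by linarith : (0:ℝ) ≤ θ) h2.le) h3]

end Aux

set_option maxHeartbeats 1000000

/-- Proposition 4.5 (i): fat-tailed alternatives are excluded,
pseudo-regularly varying case. -/
theorem stmt10
    (φ f : ℝ → ℝ)
    (hf : ∀ x ∈ Set.Ioi (0:ℝ), f x = Real.exp (-(φ x)))
    (hfc : ContinuousOn f (Set.Ioi 0))
    (hfint : ∫ x in Set.Ioi (0:ℝ), f x = 1)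
    (d : ClassIIData φ)
    (hprv : PseudoRegularlyVarying d.Ψ)
    (θ : ℝ) (hθ : 1 < θ)
    (g : ℝ → ℝ) (hgc : ContinuousOn g (Set.Ioi 0))
    (hg0 : ∀ x ∈ Set.Ioi (0:ℝ), 0 ≤ g x)
    (hgint : ∫ x in Set.Ioi (0:ℝ), g x = 1)
    (ht : ∃ t : ℝ, 1 < t ∧ t < θ ∧ ∃ c : ℝ, 0 < c ∧ ∀ᶠ x in atTop, c ≤ x ^ (t + 1) * g x) :
    Ddiv (d.FPhi θ) f g = ⊤ := by
  obtain ⟨t, ht1, htθ, c, hc, hgev⟩ := ht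
  obtain ⟨c₁, hc₁, hpsiev⟩ := d.liminf_pos
  have hθ0 : (0:ℝ) ≤ θ := by linarith
  have hp0 : 0 < d.Φ d.xbar := d.pos d.xbar self_mem_Ici
  have ha : 0 < d.aconst θ := aux_aconst_pos d hθ
  set p := d.Φ d.xbar with hpdef
  set a := d.aconst θ with hadef
  set B := |d.bconst θ| with hBdef
  set s := θ - t - 1 with hsdef
  set C₀ := a * c * (c₁ / 2) ^ θ with hC₀def
  have hC₀ : 0 < C₀ :=
    mul_pos (mul_pos ha hc) (Real.rpow_pos_of_pos (by linarith) θ)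
  obtain ⟨ε, hε, hball⟩ := Metric.eventually_nhds_iff.mp (hprv.1 1 one_pos)
  set c₀ := 1 + ε / 2 with hc₀def
  have hc₀1 : 1 < c₀ := by rw [hc₀def]; linarith
  have hc₀0 : (0:ℝ) < c₀ := by linarith
  have hQ : ∀ᶠ v in atTop, d.Ψ (c₀ * v) / d.Ψ v ≤ 1 + 1 := by
    apply hball
    rw [Real.dist_eq, hc₀def, add_sub_cancel_left, abs_of_pos (by linarith)]
    linarith
  have hφ := aux_phi_tendsto d
  set δ := 1 - 1 / c₀ with hδdef
  have hδ0 : 0 < δ := by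
    have h1 : 1 / c₀ < 1 := by rw [div_lt_one hc₀0]; linarith
    rw [hδdef]; linarith
  have key : ∀ᶠ x in atTop,
      ENNReal.ofReal (C₀ / 2 * x ^ s) ≤ ENNReal.ofReal (d.FPhi θ (g x / f x) * f x) := by
    filter_upwards [hgev, hpsiev,
      d.tendsto_div_log.eventually_ge_atTop (t + 1),
      d.tendsto_div_log.eventually_ge_atTop ((t + 1 + |Real.log c|) / δ),
      hφ.eventually_ge_atTop (c₀ * (p + 1)),
      (hφ.atTop_div_const hc₀0).eventually hQ,
      (tendsto_rpow_atTop (by linarith : (0:ℝ) < θ)).eventually_ge_atTop (2 * B / C₀),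
      eventually_ge_atTop (3:ℝ)] with x hg1 hpsi1 hlog1 hlog2 hφ1 hQ1 hxθ hx3
    have hx0 : 0 < x := by linarith
    have hlx : 1 ≤ Real.log x := by
      rw [Real.le_log_iff_exp_le hx0]
      have := Real.exp_one_lt_d9
      linarith
    have hlx0 : 0 < Real.log x := by linarith
    have hfx : f x = Real.exp (-φ x) := hf x (mem_Ioi.mpr hx0)
    have hfx0 : 0 < f x := by rw [hfx]; exact Real.exp_pos _
    have hxt : 0 < x ^ (t + 1) := Real.rpow_pos_of_pos hx0 _
    have hgx : c * x ^ (-(t + 1)) ≤ g x := by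
      rw [Real.rpow_neg hx0.le]
      have h2 : c * (x ^ (t + 1))⁻¹ ≤ x ^ (t + 1) * g x * (x ^ (t + 1))⁻¹ :=
        mul_le_mul_of_nonneg_right hg1 (by positivity)
      calc c * (x ^ (t + 1))⁻¹ ≤ x ^ (t + 1) * g x * (x ^ (t + 1))⁻¹ := h2
        _ = g x := by field_simp
    have hgx0 : 0 < g x := lt_of_lt_of_le (by positivity) hgx
    set u := φ x + Real.log (g x) with hudef
    have hlogg : Real.log c - (t + 1) * Real.log x ≤ Real.log (g x) := by
      have h3 := Real.log_le_log (by positivity) hgx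
      rw [Real.log_mul hc.ne' (by positivity), Real.log_rpow hx0] at h3
      linarith
    have hφlog : (t + 1) * Real.log x ≤ φ x := (le_div_iff₀ hlx0).mp hlog1
    have hδφ : (t + 1) * Real.log x - Real.log c ≤ δ * φ x := by
      have h5 := (le_div_iff₀ hlx0).mp hlog2
      have habs : -Real.log c ≤ |Real.log c| := neg_le_abs _
      have h6' : |Real.log c| * 1 ≤ |Real.log c| * Real.log x :=
        mul_le_mul_of_nonneg_left hlx (abs_nonneg _)
      have h6 : (t + 1) * Real.log x - Real.log c ≤
          (t + 1 + |Real.log c|) * Real.log x := by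
        have := habs
        nlinarith [h6']
      have h7 : (t + 1 + |Real.log c|) * Real.log x ≤ δ * φ x := by
        have h8 := mul_le_mul_of_nonneg_left h5 hδ0.le
        calc (t + 1 + |Real.log c|) * Real.log x
            = δ * ((t + 1 + |Real.log c|) / δ * Real.log x) := by field_simp
          _ ≤ δ * φ x := h8
      linarith
    set v := φ x / c₀ with hvdef
    have hu_lb : v ≤ u := by
      have h9 : φ x - δ * φ x ≤ u := by rw [hudef]; linarith
      have heq : v = φ x - δ * φ x := by rw [hvdef, hδdef]; field_simp; ring
      linarith
    have hv_lb : p + 1 ≤ v := by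
      rw [hvdef, le_div_iff₀ hc₀0]
      linarith
    have hvp : p ≤ v := by linarith
    have hup : p ≤ u := le_trans hvp hu_lb
    have hΨv : d.xbar ≤ d.Ψ v := aux_psi_eq d hvp
    have hΨv0 : 0 < d.Ψ v := lt_of_lt_of_le d.xbar_pos hΨv
    have hQ2 : d.Ψ (φ x) ≤ 2 * d.Ψ v := by
      have h10 := hQ1
      have h11 : c₀ * (φ x / c₀) = φ x := by field_simp
      rw [h11] at h10
      have := (div_le_iff₀ hΨv0).mp h10
      linarith
    have hΨφ : c₁ * x ≤ d.Ψ (φ x) := by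
      have := (le_div_iff₀ hx0).mp hpsi1
      linarith
    have hΨu : c₁ / 2 * x ≤ d.Ψ u := by
      have := aux_psi_mono d hvp hu_lb
      linarith
    have hy : g x / f x = Real.exp u := by
      rw [hfx, hudef, Real.exp_add, Real.exp_log hgx0, Real.exp_neg]
      field_simp
    have hybr : d.ybar < g x / f x := by
      rw [hy, ClassIIData.ybar]
      exact Real.exp_lt_exp.mpr (by linarith)
    have hFeq : d.FPhi θ (g x / f x) = a * (g x / f x) * d.Ψ u ^ θ + d.bconst θ := by
      rw [ClassIIData.FPhi, if_neg (not_le.mpr hybr), hy, Real.log_exp]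
    have hmain : C₀ * x ^ s ≤ a * g x * d.Ψ u ^ θ := by
      have h12 : (c₁ / 2 * x) ^ θ ≤ d.Ψ u ^ θ :=
        Real.rpow_le_rpow (by positivity) hΨu hθ0
      have h13 : (c₁ / 2 * x) ^ θ = (c₁ / 2) ^ θ * x ^ θ :=
        Real.mul_rpow (by linarith) hx0.le
      have e1 : a * (c * x ^ (-(t + 1))) ≤ a * g x :=
        mul_le_mul_of_nonneg_left hgx ha.le
      have h12' : (c₁ / 2) ^ θ * x ^ θ ≤ d.Ψ u ^ θ := by rw [← h13]; exact h12
      have h14 : a * (c * x ^ (-(t + 1))) * ((c₁ / 2) ^ θ * x ^ θ) ≤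
          a * g x * d.Ψ u ^ θ :=
        mul_le_mul e1 h12' (by positivity) (mul_nonneg ha.le hgx0.le)
      have h15 : a * (c * x ^ (-(t + 1))) * ((c₁ / 2) ^ θ * x ^ θ) = C₀ * x ^ s := by
        rw [hC₀def, hsdef, show θ - t - 1 = -(t + 1) + θ by ring, Real.rpow_add hx0]
        ring
      linarith [h14, h15]
    have hb1 : f x ≤ x ^ (-(t + 1)) := by
      rw [hfx, Real.rpow_def_of_pos hx0]
      exact Real.exp_le_exp.mpr (by linarith)
    have hb2 : B * f x ≤ C₀ / 2 * x ^ s := by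
      have h16 : B * f x ≤ B * x ^ (-(t + 1)) :=
        mul_le_mul_of_nonneg_left hb1 (abs_nonneg _)
      have hxneg : 0 < x ^ (-(t + 1)) := Real.rpow_pos_of_pos hx0 _
      have hxs : x ^ s = x ^ θ * x ^ (-(t + 1)) := by
        rw [← Real.rpow_add hx0, hsdef]
        congr 1; ring
      have h17 : B * x ^ (-(t + 1)) ≤ C₀ / 2 * x ^ s := by
        rw [hxs]
        calc B * x ^ (-(t + 1)) = C₀ / 2 * (2 * B / C₀) * x ^ (-(t + 1)) := by
              field_simp
          _ ≤ C₀ / 2 * x ^ θ * x ^ (-(t + 1)) :=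
              mul_le_mul_of_nonneg_right
                (mul_le_mul_of_nonneg_left hxθ (by positivity)) hxneg.le
          _ = C₀ / 2 * (x ^ θ * x ^ (-(t + 1))) := by ring
      linarith
    apply ENNReal.ofReal_le_ofReal
    have hbf : -(B * f x) ≤ d.bconst θ * f x := by
      have h0 : 0 ≤ (d.bconst θ + B) * f x :=
        mul_nonneg (by linarith [neg_abs_le (d.bconst θ)]) hfx0.le
      linarith [h0]
    have hfin : a * (g x / f x) * d.Ψ u ^ θ * f x = a * g x * d.Ψ u ^ θ := by
      field_simp
    calc C₀ / 2 * x ^ s = C₀ * x ^ s - C₀ / 2 * x ^ s := by ring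
      _ ≤ a * g x * d.Ψ u ^ θ + d.bconst θ * f x := by linarith
      _ = d.FPhi θ (g x / f x) * f x := by rw [hFeq, add_mul, hfin]
  obtain ⟨N, hN⟩ := eventually_atTop.mp key
  set M := max N 1 with hMdef
  have hM0 : (0:ℝ) < M := lt_of_lt_of_le one_pos (le_max_right _ _)
  have hstep1 : ∫⁻ x in Ioi M, ENNReal.ofReal (C₀ / 2 * x ^ s) ≤ Ddiv (d.FPhi θ) f g := by
    refine le_trans ?_ (lintegral_mono_set (Ioi_subset_Ioi hM0.le))
    apply lintegral_mono_ae
    rw [ae_restrict_iff' measurableSet_Ioi]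
    exact ae_of_all _ fun x hx => hN x (le_trans (le_max_left _ _) (le_of_lt hx))
  have hstep2 : ∫⁻ x in Ioi M, ENNReal.ofReal (C₀ / 2 * x ^ s) = ⊤ := by
    have hrw : ∀ x ∈ Ioi M, ENNReal.ofReal (C₀ / 2 * x ^ s) =
        ENNReal.ofReal (C₀ / 2) * ENNReal.ofReal (x ^ s) := fun x _ =>
      ENNReal.ofReal_mul (by positivity)
    rw [setLIntegral_congr_fun measurableSet_Ioi hrw,
      lintegral_const_mul' _ _ ENNReal.ofReal_ne_top]
    have htop : ∫⁻ x in Ioi M, ENNReal.ofReal (x ^ s) = ⊤ := by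
      by_contra hfin
      have hmeas : AEStronglyMeasurable (fun x : ℝ => x ^ s)
          (volume.restrict (Ioi M)) := by
        apply Measurable.aestronglyMeasurable
        measurability
      have hnn : 0 ≤ᵐ[volume.restrict (Ioi M)] fun x : ℝ => x ^ s := by
        filter_upwards [ae_restrict_mem measurableSet_Ioi] with x hx
        exact Real.rpow_nonneg (le_of_lt (lt_trans hM0 hx)) s
      have hint := (lintegral_ofReal_ne_top_iff_integrable hmeas hnn).mp hfin
      have hs := (integrableOn_Ioi_rpow_iff hM0).mp hint
      rw [hsdef] at hs
      linarith
    rw [htop, ENNReal.mul_top]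
    simp only [ne_eq, ENNReal.ofReal_eq_zero, not_le]
    positivity
  exact top_le_iff.mp (hstep2 ▸ hstep1)
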